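/- Let n ≥ 2 be an even integer, let i be an integer with 0 ≤ i ≤ n − 1, and let p be a real number. Then Σ_{0 ≤ j ≤ i, i − j even} M₃(n/2 − 1; j, (i−j)/2, (n−i−j−2)/2) · (2p)^j · (2p−1)^{(i−j)/2} + Σ_{0 ≤ j ≤ i, i − j odd} M₃(n/2 − 1; j, (i−j−1)/2, (n−i−j−1)/2) · (2p)^j · (2p−1)^{(i−j+1)/2} = Σ_{k ≥ 0} Σ_{l ≥ 0, k + l ≤ n/2} M(n/2; k, l) · (−1)^l · p^{n/2−k−l} · (1−p)^{k+l} · C̃(n − 2k − 2l − 1, i − 2l). Here M₃(m; a, b, c) = m!/(a! b! c!) when a, b, c are nonnegative integers summing to m (and 0 otherwise), M(m; a, b) = m!/(a! b! (m−a−b)!), and C̃(m, r) is the generalized binomial coefficient for integer m: C̃(m, r) = m(m−1)⋯(m−r+1)/r! for integers r ≥ 0 (so C̃(−1, r) = (−1)^r) and C̃(m, r) = 0 for r < 0. -/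

import Mathlib

open Finset

/-- `M(m; a, b) = m!/(a! b! (m−a−b)!)` when `a + b ≤ m`, and `0` otherwise. -/
noncomputable def Mcoef (m a b : ℕ) : ℝ :=
  if a + b ≤ m then
    (Nat.factorial m : ℝ) /
      ((Nat.factorial a : ℝ) * (Nat.factorial b : ℝ) * (Nat.factorial (m - a - b) : ℝ))
  else 0

/-- `M₃(m; a, b, c) = m!/(a! b! c!)` when `a, b, c` are nonnegative integers with
`a + b + c = m`, and `0` otherwise (in particular when some argument is not a
nonnegative integer). -/
noncomputable def M3 (m : ℕ) (a b c : ℚ) : ℝ :=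
  if 0 ≤ a ∧ 0 ≤ b ∧ 0 ≤ c ∧ a.den = 1 ∧ b.den = 1 ∧ c.den = 1 ∧ a + b + c = (m : ℚ) then
    (Nat.factorial m : ℝ) /
      ((Nat.factorial a.num.toNat : ℝ) * (Nat.factorial b.num.toNat : ℝ) *
        (Nat.factorial c.num.toNat : ℝ))
  else 0

/-- Ordinary binomial coefficient `C(a, b)` for integers, `0` when `b < 0` or `b > a`. -/
noncomputable def Cb (a b : ℤ) : ℝ :=
  if 0 ≤ b ∧ b ≤ a then ((a.toNat).choose b.toNat : ℝ) else 0

/-- Generalized binomial coefficient `C̃(m, r) = m(m−1)⋯(m−r+1)/r!` for integer `m`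
and integer `r ≥ 0`, and `0` for `r < 0`. -/
noncomputable def Cgen (m r : ℤ) : ℝ :=
  if 0 ≤ r then (∏ k ∈ Finset.range r.toNat, ((m : ℝ) - (k : ℝ))) / (Nat.factorial r.toNat : ℝ)
  else 0

section Aux

open PowerSeries

/-- Formal inverse of `1 + X` in `ℝ⟦X⟧`. -/
noncomputable def Jps : ℝ⟦X⟧ := PowerSeries.mk fun i => (-1)^i

lemma coeff_Jps (i : ℕ) : coeff i Jps = (-1)^i := coeff_mk _ _

lemma one_add_X_mul_Jps : ((1 + X) * Jps : ℝ⟦X⟧) = 1 := by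
  ext n
  cases n with
  | zero => simp [Jps]
  | succ k =>
      rw [add_mul, one_mul, map_add, coeff_succ_X_mul, coeff_Jps, coeff_Jps]
      simp [pow_succ]

lemma coeff_one_add_CX_pow (a : ℝ) (K r : ℕ) :
    coeff r ((1 + PowerSeries.C a * X) ^ K) = (K.choose r : ℝ) * a ^ r := by
  rw [add_comm, add_pow, map_sum]
  have h : ∀ k ∈ range (K + 1),
      coeff r ((PowerSeries.C a * X) ^ k * 1 ^ (K - k) * (K.choose k : ℝ⟦X⟧))
        = if r = k then (K.choose r : ℝ) * a ^ r else 0 := by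
    intro k _
    rw [one_pow, mul_one, mul_pow, ← map_pow, ← map_natCast (PowerSeries.C (R := ℝ)) (K.choose k),
      mul_comm ((PowerSeries.C (a ^ k))) (X ^ k), mul_assoc, ← map_mul,
      PowerSeries.coeff_X_pow_mul', PowerSeries.coeff_C]
    by_cases h2 : r = k
    · subst h2; simp [mul_comm]
    · rw [if_neg h2]
      split_ifs with h1 h3
      · exfalso; omega
      · rfl
      · rfl
  rw [Finset.sum_congr rfl h, Finset.sum_ite_eq (range (K+1)) r fun _ => (K.choose r : ℝ) * a ^ r]
  split_ifs with h
  · rfl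
  · rw [Nat.choose_eq_zero_of_lt (by simpa using h)]; simp

lemma coeff_trinomial (u c : ℝ) (M r : ℕ) :
    coeff r ((1 + PowerSeries.C u * X + PowerSeries.C c * X ^ 2) ^ M)
      = ∑ b ∈ (range (M + 1)).filter (fun b => 2 * b ≤ r),
          (M.choose b : ℝ) * c ^ b * (((M - b).choose (r - 2 * b) : ℝ) * u ^ (r - 2 * b)) := by
  have h0 : (1 + PowerSeries.C u * X + PowerSeries.C c * X ^ 2 : ℝ⟦X⟧)
      = PowerSeries.C c * X ^ 2 + (1 + PowerSeries.C u * X) := by ring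
  rw [h0, add_pow, map_sum, Finset.sum_filter]
  refine Finset.sum_congr rfl fun b _ => ?_
  have h1 : (PowerSeries.C c * X ^ 2) ^ b * (1 + PowerSeries.C u * X) ^ (M - b)
        * ((M.choose b : ℕ) : ℝ⟦X⟧)
      = PowerSeries.C (c ^ b * (M.choose b : ℝ)) *
          (X ^ (2 * b) * (1 + PowerSeries.C u * X) ^ (M - b)) := by
    rw [← map_natCast (PowerSeries.C (R := ℝ)) (M.choose b), mul_pow, ← map_pow, pow_mul, map_mul]
    ring
  rw [h1, PowerSeries.coeff_C_mul, PowerSeries.coeff_X_pow_mul', coeff_one_add_CX_pow]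
  split_ifs with h2
  · ring
  · simp

lemma Cgen_neg (m r : ℤ) (h : r < 0) : Cgen m r = 0 := if_neg (not_le.2 h)

lemma Cgen_natCast (a r : ℕ) : Cgen (a : ℤ) (r : ℤ) = (a.choose r : ℝ) := by
  rw [Cgen, if_pos (Int.natCast_nonneg r)]
  simp only [Int.toNat_natCast, Int.cast_natCast]
  by_cases h : r ≤ a
  · have hp : (∏ k ∈ Finset.range r, ((a : ℝ) - (k : ℝ))) = ((a.descFactorial r : ℕ) : ℝ) := by
      rw [Nat.descFactorial_eq_prod_range, Nat.cast_prod]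
      refine Finset.prod_congr rfl fun k hk => ?_
      rw [Nat.cast_sub (le_of_lt (lt_of_lt_of_le (Finset.mem_range.mp hk) h))]
    rw [hp, Nat.descFactorial_eq_factorial_mul_choose, Nat.cast_mul,
      mul_comm ((r.factorial : ℝ)) _, mul_div_assoc,
      div_self (show ((r.factorial : ℝ)) ≠ 0 by exact_mod_cast r.factorial_ne_zero), mul_one]
  · rw [Nat.choose_eq_zero_of_lt (by omega), Nat.cast_zero]
    rw [Finset.prod_eq_zero (Finset.mem_range.mpr (show a < r by omega)) (by simp)]
    simp

lemma Cgen_negOne (r : ℕ) : Cgen (-1) (r : ℤ) = (-1 : ℝ) ^ r := by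
  rw [Cgen, if_pos (Int.natCast_nonneg r)]
  simp only [Int.toNat_natCast, Int.cast_neg, Int.cast_one]
  have hp : (∏ k ∈ Finset.range r, ((-1 : ℝ) - (k : ℝ))) = (-1) ^ r * (r.factorial : ℝ) := by
    induction r with
    | zero => simp
    | succ t ih =>
        rw [Finset.prod_range_succ, ih, Nat.factorial_succ]
        push_cast
        ring
  rw [hp, mul_div_assoc, div_self (by exact_mod_cast r.factorial_ne_zero), mul_one]

lemma Mcoef_eval (m k l : ℕ) (h : k + l ≤ m) :
    Mcoef m k l = (m.choose (k + l) : ℝ) * ((k + l).choose l : ℝ) := by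
  rw [Mcoef, if_pos h, Nat.cast_choose ℝ h, Nat.cast_choose ℝ (Nat.le_add_left l k)]
  have h1 : k + l - l = k := by omega
  have e1 : m - (k + l) = m - k - l := by omega
  rw [h1, e1]
  have nz : ∀ t : ℕ, ((t.factorial : ℝ)) ≠ 0 := fun t => by exact_mod_cast t.factorial_ne_zero
  field_simp

lemma M3_eq_choose (M j b : ℕ) :
    M3 M (j : ℚ) (b : ℚ) ((M : ℚ) - j - b) = (M.choose b : ℝ) * ((M - b).choose j : ℝ) := by
  by_cases h : j + b ≤ M
  · have h3 : ((M : ℚ) - j - b) = ((M - j - b : ℕ) : ℚ) := by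
      have h4 : M - j - b = M - (j + b) := by omega
      rw [h4, Nat.cast_sub h]; push_cast; ring
    rw [h3, M3]
    rw [if_pos]
    · simp only [Rat.num_natCast, Int.toNat_natCast]
      rw [Nat.cast_choose ℝ (show b ≤ M by omega), Nat.cast_choose ℝ (show j ≤ M - b by omega)]
      have e1 : M - b - j = M - j - b := by omega
      rw [e1]
      have nz : ∀ t : ℕ, ((t.factorial : ℝ)) ≠ 0 := fun t => by exact_mod_cast t.factorial_ne_zero
      field_simp
    · refine ⟨by positivity, by positivity, by positivity, Rat.den_natCast _, Rat.den_natCast _,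
        Rat.den_natCast _, ?_⟩
      have h4 : M - j - b = M - (j + b) := by omega
      rw [h4, Nat.cast_sub h]; push_cast; ring
  · rw [M3, if_neg]
    · by_cases hb : b ≤ M
      · rw [Nat.choose_eq_zero_of_lt (show M - b < j by omega), Nat.cast_zero, mul_zero]
      · rw [Nat.choose_eq_zero_of_lt (show M < b by omega), Nat.cast_zero, zero_mul]
    · rintro ⟨_, _, h3, _⟩
      have h4 : (0:ℚ) ≤ (M:ℚ) - j - b := h3
      have h5 : (j:ℚ) + b ≤ M := by linarith
      exact h (by exact_mod_cast h5)

lemma coeff_W (t l i : ℕ) :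
    coeff i (X ^ (2*l) * ((1+X) ^ (2*t) * Jps)) = Cgen (2*(t:ℤ) - 1) ((i:ℤ) - 2*l) := by
  rw [PowerSeries.coeff_X_pow_mul']
  by_cases h : 2*l ≤ i
  · rw [if_pos h]
    have hr : ((i:ℤ) - 2*l) = ((i - 2*l : ℕ) : ℤ) := by push_cast [Nat.cast_sub h]; ring
    rw [hr]
    cases t with
    | zero =>
        rw [mul_zero, pow_zero, one_mul, coeff_Jps]
        have h1 : (2*((0:ℕ):ℤ) - 1) = -1 := by norm_num
        rw [h1, Cgen_negOne]
    | succ s =>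
        have hJ : ((1+X) ^ (2*(s+1)) * Jps : ℝ⟦X⟧) = (1+X) ^ (2*s+1) := by
          rw [show 2*(s+1) = (2*s+1)+1 by omega, pow_succ, mul_assoc, one_add_X_mul_Jps, mul_one]
        have hX : (1 + X : ℝ⟦X⟧) = 1 + PowerSeries.C 1 * X := by rw [map_one, one_mul]
        rw [hJ, hX, coeff_one_add_CX_pow, one_pow, mul_one]
        have h1 : (2*(((s+1):ℕ):ℤ) - 1) = ((2*s+1 : ℕ) : ℤ) := by push_cast; ring
        rw [h1, Cgen_natCast]
  · rw [if_neg h, Cgen_neg _ _ (by omega)]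

lemma coeff_QmJ (p : ℝ) (m i : ℕ) :
    coeff i (((PowerSeries.C (1-p)) * (1 - X^2) + (PowerSeries.C p) * (1+X)^2) ^ m * Jps)
      = ∑ s ∈ range (m+1), ∑ l ∈ range (s+1),
          (m.choose s : ℝ) * (s.choose l : ℝ) * (1-p)^s * p^(m-s) * (-1)^l *
            Cgen (2*((m:ℤ) - (s:ℤ)) - 1) ((i:ℤ) - 2*l) := by
  rw [add_pow, Finset.sum_mul, map_sum]
  refine Finset.sum_congr rfl fun s hs => ?_
  have hsm : s ≤ m := by
    have := mem_range.mp hs; omega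
  have h1 : ((PowerSeries.C (1-p)) * (1 - X^2))^s
      = (PowerSeries.C ((1-p)^s)) *
          ∑ l ∈ range (s+1), PowerSeries.C ((-1:ℝ)^l) * X^(2*l) * ((s.choose l : ℕ) : ℝ⟦X⟧) := by
    rw [mul_pow, ← map_pow]
    congr 1
    rw [show (1 - X^2 : ℝ⟦X⟧) = (-X^2) + 1 by ring, add_pow]
    refine Finset.sum_congr rfl fun l _ => ?_
    rw [one_pow, mul_one, neg_pow, ← pow_mul, map_pow, map_neg, map_one]
  have hq : ((PowerSeries.C (1-p)) * (1 - X^2))^s * ((PowerSeries.C p) * (1+X)^2)^(m-s)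
        * ((m.choose s : ℕ) : ℝ⟦X⟧) * Jps
      = ∑ l ∈ range (s+1),
          PowerSeries.C ((1-p)^s * (-1)^l * (s.choose l : ℝ) * p^(m-s) * (m.choose s : ℝ)) *
            (X^(2*l) * ((1+X)^(2*(m-s)) * Jps)) := by
    rw [h1]
    simp only [Finset.mul_sum, Finset.sum_mul]
    refine Finset.sum_congr rfl fun l _ => ?_
    rw [mul_pow, ← map_pow, ← pow_mul, map_mul, map_mul, map_mul, map_mul,
      map_natCast, map_natCast]
    ring
  rw [hq, map_sum]
  refine Finset.sum_congr rfl fun l _ => ?_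
  rw [PowerSeries.coeff_C_mul, coeff_W]
  have h2 : (2*(((m-s):ℕ):ℤ) - 1) = (2*((m:ℤ) - (s:ℤ)) - 1) := by
    push_cast [Nat.cast_sub hsm]; ring
  rw [h2]
  ring

lemma sum_tri (m : ℕ) (F : ℕ → ℕ → ℝ) :
    ∑ k ∈ range (m+1), ∑ l ∈ range (m+1-k), F k l
      = ∑ s ∈ range (m+1), ∑ l ∈ range (s+1), F (s-l) l := by
  rw [Finset.sum_sigma', Finset.sum_sigma']
  refine Finset.sum_nbij' (fun x => ⟨x.1 + x.2, x.2⟩) (fun y => ⟨y.1 - y.2, y.2⟩)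
    ?_ ?_ ?_ ?_ ?_
  · rintro ⟨k, l⟩ hx
    simp only [Finset.mem_sigma, Finset.mem_range] at *
    omega
  · rintro ⟨s, l⟩ hy
    simp only [Finset.mem_sigma, Finset.mem_range] at *
    omega
  · rintro ⟨k, l⟩ hx
    simp only [Finset.mem_sigma, Finset.mem_range] at hx
    simp
  · rintro ⟨s, l⟩ hy
    simp only [Finset.mem_sigma, Finset.mem_range] at hy
    have h : s - l + l = s := by omega
    simp [h]
  · rintro ⟨k, l⟩ hx
    simp

end Aux
section Main

open PowerSeries

lemma even_part (p : ℝ) (n M i : ℕ) (hn2 : n = 2*M+2) : i ≤ 2*M+1 →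
    (∑ j ∈ (Finset.range (i + 1)).filter (fun j => (i - j) % 2 = 0),
        M3 M (j : ℚ) (((i : ℚ) - j) / 2) (((n : ℚ) - i - j - 2) / 2) *
          (2 * p) ^ j * (2 * p - 1) ^ ((i - j) / 2))
      = coeff i ((1 + PowerSeries.C (2*p) * X + PowerSeries.C (2*p-1) * X^2) ^ M) := by
  intro hiM
  have hnq : (n : ℚ) = 2 * (M:ℚ) + 2 := by exact_mod_cast hn2
  rw [coeff_trinomial (2*p) (2*p-1) M i]
  refine Finset.sum_nbij' (fun j => (i - j)/2) (fun b => i - 2*b) ?_ ?_ ?_ ?_ ?_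
  · intro j hj
    simp only [Finset.mem_filter, Finset.mem_range] at *
    omega
  · intro b hb
    simp only [Finset.mem_filter, Finset.mem_range] at *
    omega
  · intro j hj
    simp only [Finset.mem_filter, Finset.mem_range] at hj
    omega
  · intro b hb
    simp only [Finset.mem_filter, Finset.mem_range] at hb
    omega
  · intro j hj
    simp only [Finset.mem_filter, Finset.mem_range] at hj
    have h2b : i = j + 2 * ((i - j)/2) := by omega
    have hiq : (i:ℚ) = (j:ℚ) + 2 * ((((i-j)/2 : ℕ)) : ℚ) := by exact_mod_cast h2b
    have ha2 : (((i : ℚ) - j) / 2) = ((((i-j)/2 : ℕ)) : ℚ) := by rw [hiq]; ring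
    have ha3 : (((n : ℚ) - i - j - 2) / 2) = (M:ℚ) - (j:ℚ) - ((((i-j)/2 : ℕ)) : ℚ) := by
      rw [hnq, hiq]; ring
    rw [ha2, ha3, M3_eq_choose]
    have e4 : i - 2 * ((i - j)/2) = j := by omega
    rw [e4]
    ring

lemma odd_part (p : ℝ) (n M i : ℕ) (hn2 : n = 2*M+2) : i ≤ 2*M+1 →
    (∑ j ∈ (Finset.range (i + 1)).filter (fun j => (i - j) % 2 = 1),
        M3 M (j : ℚ) (((i : ℚ) - j - 1) / 2) (((n : ℚ) - i - j - 1) / 2) *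
          (2 * p) ^ j * (2 * p - 1) ^ ((i - j + 1) / 2))
      = coeff i ((1 + PowerSeries.C (2*p) * X + PowerSeries.C (2*p-1) * X^2) ^ M
          * (PowerSeries.C (2*p-1) * X)) := by
  cases i with
  | zero =>
      intro _
      have h1 : ((1 + PowerSeries.C (2*p) * X + PowerSeries.C (2*p-1) * X^2) ^ M
            * (PowerSeries.C (2*p-1) * X) : ℝ⟦X⟧)
          = ((1 + PowerSeries.C (2*p) * X + PowerSeries.C (2*p-1) * X^2) ^ M
            * PowerSeries.C (2*p-1)) * X := by ring
      rw [h1, PowerSeries.coeff_zero_mul_X, Finset.sum_filter, Finset.sum_range_one]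
      norm_num
  | succ r =>
      intro hiM
      have hnq : (n : ℚ) = 2 * (M:ℚ) + 2 := by exact_mod_cast hn2
      have h1 : ((1 + PowerSeries.C (2*p) * X + PowerSeries.C (2*p-1) * X^2) ^ M
            * (PowerSeries.C (2*p-1) * X) : ℝ⟦X⟧)
          = (PowerSeries.C (2*p-1)
              * (1 + PowerSeries.C (2*p) * X + PowerSeries.C (2*p-1) * X^2) ^ M) * X := by
        ring
      rw [h1, PowerSeries.coeff_succ_mul_X, PowerSeries.coeff_C_mul,
        coeff_trinomial (2*p) (2*p-1) M r, Finset.mul_sum]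
      refine Finset.sum_nbij' (fun j => (r - j)/2) (fun b => r - 2*b) ?_ ?_ ?_ ?_ ?_
      · intro j hj
        simp only [Finset.mem_filter, Finset.mem_range] at *
        omega
      · intro b hb
        simp only [Finset.mem_filter, Finset.mem_range] at *
        omega
      · intro j hj
        simp only [Finset.mem_filter, Finset.mem_range] at hj
        omega
      · intro b hb
        simp only [Finset.mem_filter, Finset.mem_range] at hb
        omega
      · intro j hj
        simp only [Finset.mem_filter, Finset.mem_range] at hj
        have hjr : j ≤ r := by omega
        have h2b : r = j + 2 * ((r - j)/2) := by omega
        have hiq : (r:ℚ) = (j:ℚ) + 2 * ((((r-j)/2 : ℕ)) : ℚ) := by exact_mod_cast h2b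
        have hc1 : (((r+1 : ℕ)) : ℚ) = (r:ℚ) + 1 := by push_cast; ring
        have ha2 : ((((r+1:ℕ) : ℚ)) - j - 1) / 2 = ((((r-j)/2 : ℕ)) : ℚ) := by
          rw [hc1, hiq]; ring
        have ha3 : (((n : ℚ) - ((r+1:ℕ):ℚ) - j - 1) / 2)
            = (M:ℚ) - (j:ℚ) - ((((r-j)/2 : ℕ)) : ℚ) := by
          rw [hc1, hnq, hiq]; ring
        rw [ha2, ha3, M3_eq_choose]
        have e4 : r - 2 * ((r - j)/2) = j := by omega
        have e5 : (r + 1 - j + 1)/2 = (r - j)/2 + 1 := by omega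
        rw [e4, e5]
        ring

end Main

open PowerSeries in
/-- The Murnaghan–Nakayama recursion and the character polynomial give the same
value `C(n−1,i)·ψ_{[n−i,1^i]}` for the hook eigenvalue of the involution walk:
a polynomial identity in `p` (Proposition `n-11ieig`). -/
theorem stmt12 (n : ℕ) (hn : 2 ≤ n) (hne : Even n) (i : ℕ) (hi : i ≤ n - 1) (p : ℝ) :
    (∑ j ∈ (Finset.range (i + 1)).filter (fun j => (i - j) % 2 = 0),
        M3 (n / 2 - 1) (j : ℚ) (((i : ℚ) - j) / 2) (((n : ℚ) - i - j - 2) / 2) *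
          (2 * p) ^ j * (2 * p - 1) ^ ((i - j) / 2))
    + (∑ j ∈ (Finset.range (i + 1)).filter (fun j => (i - j) % 2 = 1),
        M3 (n / 2 - 1) (j : ℚ) (((i : ℚ) - j - 1) / 2) (((n : ℚ) - i - j - 1) / 2) *
          (2 * p) ^ j * (2 * p - 1) ^ ((i - j + 1) / 2))
    = ∑ k ∈ Finset.range (n / 2 + 1), ∑ l ∈ Finset.range (n / 2 + 1 - k),
        Mcoef (n / 2) k l * (-1 : ℝ) ^ l * p ^ (n / 2 - k - l) * (1 - p) ^ (k + l) *
          Cgen ((n : ℤ) - 2 * k - 2 * l - 1) ((i : ℤ) - 2 * l) := by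
  obtain ⟨w, hw⟩ := hne
  set M : ℕ := n / 2 - 1 with hM
  have hn2 : n = 2 * M + 2 := by omega
  have hnd : n / 2 = M + 1 := by omega
  have hiM : i ≤ 2 * M + 1 := by omega
  have hfact : (1 + PowerSeries.C (2*p) * X + PowerSeries.C (2*p-1) * X^2 : ℝ⟦X⟧)
      = (1 + X) * (1 + PowerSeries.C (2*p-1) * X) := by
    have h2 : PowerSeries.C (2*p) = PowerSeries.C (2*p-1) + 1 := by
      rw [← map_one (PowerSeries.C (R := ℝ)), ← map_add]
      norm_num
    rw [h2]; ring
  have hQkey : ((PowerSeries.C (1-p)) * (1 - X^2) + (PowerSeries.C p) * (1+X)^2 : ℝ⟦X⟧)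
      = 1 + PowerSeries.C (2*p) * X + PowerSeries.C (2*p-1) * X^2 := by
    have h1 : PowerSeries.C (1-p) = 1 - PowerSeries.C p := by rw [map_sub, map_one]
    have h2 : PowerSeries.C (2*p) = 2 * PowerSeries.C p := by rw [map_mul, map_ofNat]
    have h3 : PowerSeries.C (2*p-1) = 2 * PowerSeries.C p - 1 := by
      rw [map_sub, map_mul, map_ofNat, map_one]
    rw [h1, h2, h3]; ring
  have hbig : ((1 + PowerSeries.C (2*p) * X + PowerSeries.C (2*p-1) * X^2 : ℝ⟦X⟧) ^ (M+1))
        * Jps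
      = (1 + PowerSeries.C (2*p) * X + PowerSeries.C (2*p-1) * X^2 : ℝ⟦X⟧) ^ M
          * (1 + PowerSeries.C (2*p-1) * X) := by
    rw [pow_succ, mul_assoc]
    congr 1
    rw [hfact, mul_comm (1 + X : ℝ⟦X⟧), mul_assoc, one_add_X_mul_Jps, mul_one]
  have hR : (∑ k ∈ Finset.range (n / 2 + 1), ∑ l ∈ Finset.range (n / 2 + 1 - k),
        Mcoef (n / 2) k l * (-1 : ℝ) ^ l * p ^ (n / 2 - k - l) * (1 - p) ^ (k + l) *
          Cgen ((n : ℤ) - 2 * k - 2 * l - 1) ((i : ℤ) - 2 * l))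
      = coeff i (((1 + PowerSeries.C (2*p) * X + PowerSeries.C (2*p-1) * X^2 : ℝ⟦X⟧)
          ^ (M+1)) * Jps) := by
    have h0 := coeff_QmJ p (M+1) i
    rw [hQkey] at h0
    rw [hnd, sum_tri (M+1) (fun k l => Mcoef (M+1) k l * (-1 : ℝ) ^ l * p ^ (M+1 - k - l)
      * (1 - p) ^ (k + l) * Cgen ((n : ℤ) - 2 * k - 2 * l - 1) ((i : ℤ) - 2 * l)), h0]
    refine Finset.sum_congr rfl fun s hs => Finset.sum_congr rfl fun l hl => ?_
    have hsM : s ≤ M + 1 := by have := Finset.mem_range.mp hs; omega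
    have hls : l ≤ s := by have := Finset.mem_range.mp hl; omega
    have e1 : s - l + l = s := by omega
    rw [Mcoef_eval (M+1) (s-l) l (by omega), e1]
    have e2 : M + 1 - (s - l) - l = M + 1 - s := by omega
    rw [e2]
    have e3 : ((n:ℤ) - 2 * ((s - l : ℕ) : ℤ) - 2 * (l:ℤ) - 1)
        = 2 * ((((M+1) : ℕ):ℤ) - (s:ℤ)) - 1 := by
      have hnz : (n : ℤ) = 2 * (M:ℤ) + 2 := by exact_mod_cast hn2
      push_cast [Nat.cast_sub hls]
      omega
    rw [e3]
    ring
  rw [even_part p n M i hn2 hiM, odd_part p n M i hn2 hiM, hR, hbig, mul_add, mul_one, map_add]
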